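/- Let n ≥ 1 be an integer and let ζ = exp(πi/n) ∈ ℂ. Then Σ_{j=1}^{2n−1} ζ^{(n−1)j}/(1−ζ^{−j})² = (2n²+1)/12 (an equality of complex numbers, the right-hand side being a rational number viewed in ℂ). -/

import Mathlib

open Finset

private lemma geom_aux (x : ℂ) (m : ℕ) :
    (1 - x) * ∑ a ∈ range m, x ^ a = 1 - x ^ m := by
  induction m with
  | zero => simp
  | succ m ih => rw [sum_range_succ]; rw [mul_add, ih]; ring

private lemma sumA_aux (x : ℂ) (m : ℕ) :
    (1 - x) ^ 2 * ∑ a ∈ range m, (a : ℂ) * x ^ a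
      = x - (m : ℂ) * x ^ m + ((m : ℂ) - 1) * x ^ (m + 1) := by
  induction m with
  | zero => simp
  | succ m ih =>
    rw [sum_range_succ, mul_add, ih]
    push_cast
    ring

private lemma sumB_aux (x : ℂ) (m : ℕ) :
    (1 - x) ^ 3 * ∑ a ∈ range m, (a : ℂ) ^ 2 * x ^ a
      = x + x ^ 2 - (m : ℂ) ^ 2 * x ^ m + (2 * (m : ℂ) ^ 2 - 2 * m - 1) * x ^ (m + 1)
        - ((m : ℂ) - 1) ^ 2 * x ^ (m + 2) := by
  induction m with
  | zero => norm_num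
  | succ m ih =>
    rw [sum_range_succ, mul_add, ih]
    push_cast
    ring

private lemma sumId_aux (m : ℕ) :
    ∑ a ∈ range m, (a : ℂ) = ((m : ℂ) ^ 2 - m) / 2 := by
  induction m with
  | zero => simp
  | succ m ih =>
    rw [sum_range_succ, ih]
    push_cast
    ring

private lemma sumSq_aux (m : ℕ) :
    ∑ a ∈ range m, (a : ℂ) ^ 2 = (2 * (m : ℂ) ^ 3 - 3 * (m : ℂ) ^ 2 + m) / 6 := by
  induction m with
  | zero => simp
  | succ m ih =>
    rw [sum_range_succ, ih]
    push_cast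
    ring

/-- For `w` an `m`-th root of unity, `w ≠ 1`:
`(1-w)^2 * ∑_{a<m} a(m-a) w^a = 2 m w`. -/
private lemma key_aux (m : ℕ) (w : ℂ) (h1 : w ^ m = 1) (h2 : w ≠ 1) :
    (1 - w) ^ 2 * ∑ a ∈ range m, (a : ℂ) * ((m : ℂ) - a) * w ^ a = 2 * m * w := by
  have hw : (1 : ℂ) - w ≠ 0 := sub_ne_zero.mpr (Ne.symm h2)
  have hsplit : ∑ a ∈ range m, (a : ℂ) * ((m : ℂ) - a) * w ^ a
      = (m : ℂ) * ∑ a ∈ range m, (a : ℂ) * w ^ a - ∑ a ∈ range m, (a : ℂ) ^ 2 * w ^ a := by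
    rw [mul_sum, ← sum_sub_distrib]
    exact sum_congr rfl fun a _ => by ring
  apply mul_left_cancel₀ hw
  have hA := sumA_aux w m
  have hB := sumB_aux w m
  have hwm1 : w ^ (m + 1) = w := by rw [pow_succ, h1, one_mul]
  have hwm2 : w ^ (m + 2) = w ^ 2 := by rw [pow_add, h1, one_mul]
  rw [hsplit]
  calc (1 - w) * ((1 - w) ^ 2 * ((m : ℂ) * ∑ a ∈ range m, (a : ℂ) * w ^ a
        - ∑ a ∈ range m, (a : ℂ) ^ 2 * w ^ a))
      = (m : ℂ) * (1 - w) * ((1 - w) ^ 2 * ∑ a ∈ range m, (a : ℂ) * w ^ a)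
        - (1 - w) ^ 3 * ∑ a ∈ range m, (a : ℂ) ^ 2 * w ^ a := by ring
    _ = (m : ℂ) * (1 - w) * (w - (m : ℂ) * w ^ m + ((m : ℂ) - 1) * w ^ (m + 1))
        - (w + w ^ 2 - (m : ℂ) ^ 2 * w ^ m + (2 * (m : ℂ) ^ 2 - 2 * m - 1) * w ^ (m + 1)
          - ((m : ℂ) - 1) ^ 2 * w ^ (m + 2)) := by rw [hA, hB]
    _ = (1 - w) * (2 * m * w) := by rw [h1, hwm1, hwm2]; ring

/-- For `n ≥ 1` and `ζ = exp(πi/n)`: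
`∑_{j=1}^{2n-1} ζ^{(n-1)j}/(1-ζ^{-j})² = (2n²+1)/12`. -/
theorem beta_sum_prism_v1 (n : ℕ) (hn : 1 ≤ n) (ζ : ℂ)
    (hζ : ζ = Complex.exp (Real.pi * Complex.I / n)) :
    ∑ j ∈ Finset.Icc 1 (2 * n - 1), ζ ^ ((n - 1) * j) / (1 - ζ ^ (-(j : ℤ))) ^ 2 =
      (2 * (n : ℂ) ^ 2 + 1) / 12 := by
  have hn0 : (n : ℂ) ≠ 0 := Nat.cast_ne_zero.mpr (by omega)
  have hm0 : 2 * n ≠ 0 := by omega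
  -- ζ is a primitive (2n)-th root of unity
  have hprim : IsPrimitiveRoot ζ (2 * n) := by
    have h := Complex.isPrimitiveRoot_exp (2 * n) hm0
    have heq : (2 * Real.pi * Complex.I / (2 * n : ℕ) : ℂ) = Real.pi * Complex.I / n := by
      push_cast
      field_simp
    rwa [heq, ← hζ] at h
  have hζ0 : ζ ≠ 0 := hζ ▸ Complex.exp_ne_zero _
  have hdvd : ∀ k : ℤ, ζ ^ k = 1 ↔ ((2 * n : ℕ) : ℤ) ∣ k := fun k =>
    hprim.zpow_eq_one_iff_dvd k
  have hden : (2 * (2 * (n : ℂ))) ≠ 0 :=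
    mul_ne_zero two_ne_zero (mul_ne_zero two_ne_zero hn0)
  -- ζ^(-j) ≠ 1 for j ∈ [1, 2n-1]
  have hne1 : ∀ j ∈ Finset.Icc 1 (2 * n - 1), ζ ^ (-(j : ℤ)) ≠ 1 := by
    intro j hj
    simp only [Finset.mem_Icc] at hj
    intro h
    rw [hdvd] at h
    rw [Int.dvd_neg, Int.natCast_dvd_natCast] at h
    have := Nat.le_of_dvd (by omega) h
    omega
  have hpow : ∀ j ∈ Finset.Icc 1 (2 * n - 1), (ζ ^ (-(j : ℤ))) ^ (2 * n) = 1 := by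
    intro j hj
    rw [← zpow_natCast, ← zpow_mul]
    rw [hdvd]
    exact ⟨-(j : ℤ), by ring⟩
  -- rewrite each term using the key lemma
  have hterm : ∀ j ∈ Finset.Icc 1 (2 * n - 1),
      ζ ^ ((n - 1) * j) / (1 - ζ ^ (-(j : ℤ))) ^ 2
        = ∑ a ∈ range (2 * n), (a : ℂ) * ((2 * n : ℂ) - a) * ζ ^ (-((n : ℤ) + a) * j)
            / (2 * (2 * n : ℂ)) := by
    intro j hj
    have hne := hne1 j hj
    have hw : (1 : ℂ) - ζ ^ (-(j : ℤ)) ≠ 0 := sub_ne_zero.mpr (Ne.symm hne)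
    have hkey := key_aux (2 * n) (ζ ^ (-(j : ℤ))) (hpow j hj) hne
    -- numerator: ζ^((n-1)*j) = (ζ^(-j))^(n+1)
    have hnum : ζ ^ ((n - 1) * j) = (ζ ^ (-(j : ℤ))) ^ (n + 1) := by
      have h2 : ζ ^ ((2 * n * j : ℕ) : ℤ) = 1 := by
        rw [hdvd]; exact ⟨j, by push_cast; ring⟩
      rw [← zpow_natCast (ζ ^ (-(j : ℤ))) (n + 1), ← zpow_mul,
        ← zpow_natCast ζ ((n - 1) * j)]
      conv_rhs => rw [← mul_one (ζ ^ (-(j : ℤ) * ((n + 1 : ℕ) : ℤ))), ← h2,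
        ← zpow_add₀ hζ0]
      congr 1
      push_cast [Nat.cast_sub hn]
      ring
    have hna : ∀ a : ℕ, (ζ ^ (-(j : ℤ))) ^ n * (ζ ^ (-(j : ℤ))) ^ a
        = ζ ^ (-((n : ℤ) + a) * j) := by
      intro a
      rw [← pow_add, ← zpow_natCast (ζ ^ (-(j : ℤ))) (n + a), ← zpow_mul]
      congr 1
      push_cast
      ring
    rw [hnum, ← Finset.sum_div, div_eq_div_iff (pow_ne_zero _ hw) hden, Finset.sum_mul]
    have hstep : ∀ a ∈ range (2 * n),
        (a : ℂ) * (2 * (n : ℂ) - a) * ζ ^ (-((n : ℤ) + a) * j) * (1 - ζ ^ (-(j : ℤ))) ^ 2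
        = ((a : ℂ) * (((2 * n : ℕ) : ℂ) - a) * (ζ ^ (-(j : ℤ))) ^ a)
            * ((ζ ^ (-(j : ℤ))) ^ n * (1 - ζ ^ (-(j : ℤ))) ^ 2) := by
      intro a _
      rw [← hna a]
      push_cast
      ring
    rw [sum_congr rfl hstep, ← Finset.sum_mul]
    have h3 : (∑ a ∈ range (2 * n), (a : ℂ) * (((2 * n : ℕ) : ℂ) - a) * (ζ ^ (-(j : ℤ))) ^ a)
          * ((ζ ^ (-(j : ℤ))) ^ n * (1 - ζ ^ (-(j : ℤ))) ^ 2)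
        = (ζ ^ (-(j : ℤ))) ^ n * ((1 - ζ ^ (-(j : ℤ))) ^ 2
            * ∑ a ∈ range (2 * n), (a : ℂ) * (((2 * n : ℕ) : ℂ) - a) * (ζ ^ (-(j : ℤ))) ^ a) := by
      ring
    rw [h3, hkey]
    push_cast
    ring
  rw [sum_congr rfl hterm]
  rw [Finset.sum_comm]
  -- inner orthogonality sums
  have hinner : ∀ a ∈ range (2 * n),
      ∑ j ∈ Finset.Icc 1 (2 * n - 1),
        (a : ℂ) * ((2 * n : ℂ) - a) * ζ ^ (-((n : ℤ) + a) * j) / (2 * (2 * n : ℂ))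
      = (a : ℂ) * ((2 * n : ℂ) - a) * ((if a = n then (2 * n : ℂ) else 0) - 1)
          / (2 * (2 * n : ℂ)) := by
    intro a ha
    simp only [Finset.mem_range] at ha
    have hexpu : ∀ j : ℕ, ζ ^ (-((n : ℤ) + a) * j) = (ζ ^ (-((n : ℤ) + a))) ^ j := by
      intro j
      rw [← zpow_natCast (ζ ^ (-((n : ℤ) + a))) j, ← zpow_mul]
    set u : ℂ := ζ ^ (-((n : ℤ) + a)) with hu
    have hum : u ^ (2 * n) = 1 := by
      rw [hu, ← zpow_natCast (ζ ^ (-((n : ℤ) + a))) (2 * n), ← zpow_mul, hdvd]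
      exact ⟨-((n : ℤ) + a), by push_cast; ring⟩
    have hsum : ∑ j ∈ Finset.Icc 1 (2 * n - 1), u ^ j
        = (if a = n then (2 * n : ℂ) else 0) - 1 := by
      have hIcc : Finset.Icc 1 (2 * n - 1) = (range (2 * n)).erase 0 := by
        ext j
        simp only [Finset.mem_Icc, Finset.mem_erase, Finset.mem_range]
        omega
      rw [hIcc, Finset.sum_erase_eq_sub (by simp only [Finset.mem_range]; omega), pow_zero]
      congr 1
      by_cases hcase : a = n
      · subst hcase
        have hu1 : u = 1 := by
          rw [hu, hdvd]
          exact ⟨-1, by push_cast; ring⟩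
        simp [hu1]
      · have hu1 : u ≠ 1 := by
          rw [hu]
          intro h
          rw [hdvd, Int.dvd_neg] at h
          have h' : (2 * n : ℕ) ∣ (n + a) := by
            rwa [show ((n : ℤ) + a) = ((n + a : ℕ) : ℤ) by push_cast; ring,
              Int.natCast_dvd_natCast] at h
          obtain ⟨d, hd⟩ := h'
          rcases d with _ | _ | d
          · omega
          · omega
          · have hx : 2 * n * (d + 1 + 1) = 2 * n * d + 4 * n := by ring
            omega
        have hg := geom_aux u (2 * n)
        rw [hum, sub_self] at hg
        have hu0 : (1 : ℂ) - u ≠ 0 := sub_ne_zero.mpr (Ne.symm hu1)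
        have h0 : ∑ j ∈ range (2 * n), u ^ j = 0 :=
          (mul_eq_zero.mp hg).resolve_left hu0
        rw [if_neg hcase, h0]
    calc ∑ j ∈ Finset.Icc 1 (2 * n - 1),
          (a : ℂ) * ((2 * n : ℂ) - a) * ζ ^ (-((n : ℤ) + a) * j) / (2 * (2 * n : ℂ))
        = (a : ℂ) * ((2 * n : ℂ) - a) * (∑ j ∈ Finset.Icc 1 (2 * n - 1), u ^ j)
            / (2 * (2 * n : ℂ)) := by
          rw [mul_sum, sum_div]
          exact sum_congr rfl fun j _ => by rw [hexpu j]
      _ = _ := by rw [hsum]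
  rw [sum_congr rfl hinner]
  -- final arithmetic
  have hC : ∑ a ∈ range (2 * n), (a : ℂ) * ((2 * n : ℂ) - a) = ((2 * n : ℂ) ^ 3 - 2 * n) / 6 := by
    have h1 := sumId_aux (2 * n)
    have h2 := sumSq_aux (2 * n)
    calc ∑ a ∈ range (2 * n), (a : ℂ) * ((2 * n : ℂ) - a)
        = (2 * n : ℂ) * ∑ a ∈ range (2 * n), (a : ℂ)
            - ∑ a ∈ range (2 * n), (a : ℂ) ^ 2 := by
          rw [mul_sum, ← sum_sub_distrib]
          exact sum_congr rfl fun a _ => by ring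
      _ = _ := by rw [h1, h2]; push_cast; ring
  rw [← Finset.sum_div]
  have hS : ∑ a ∈ range (2 * n),
      (a : ℂ) * ((2 * n : ℂ) - a) * ((if a = n then (2 * n : ℂ) else 0) - 1)
      = (n : ℂ) * ((2 * n : ℂ) - n) * (2 * n) - ((2 * n : ℂ) ^ 3 - 2 * n) / 6 := by
    have hsub : ∑ a ∈ range (2 * n),
        (a : ℂ) * ((2 * n : ℂ) - a) * ((if a = n then (2 * n : ℂ) else 0) - 1)
        = (∑ a ∈ range (2 * n),
            if a = n then (a : ℂ) * ((2 * n : ℂ) - a) * (2 * n) else 0)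
          - ∑ a ∈ range (2 * n), (a : ℂ) * ((2 * n : ℂ) - a) := by
      rw [← sum_sub_distrib]
      refine sum_congr rfl fun a _ => ?_
      by_cases h : a = n <;> simp [h] <;> ring
    rw [hsub, Finset.sum_ite_eq' (range (2 * n)) n
      (fun a => (a : ℂ) * ((2 * n : ℂ) - a) * (2 * n)),
      if_pos (by simp only [Finset.mem_range]; omega), hC]
  rw [hS]
  field_simp
  ring
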